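/- arXiv:1402.4355 — 6 statements merged into one kernel-verified Lean document; each statement's English description precedes it below -/
import Mathlib

section
/- Let l be a filter on a type α and let μ, p, E : α → ℝ be functions such that, eventually along l, μ(s) ≥ 0, μ(s) + 3·p(s) ≥ 0 and μ(s) + p(s) > 0. If the slope function s ↦ ((2/3)·μ(s) + E(s)) / (E(s) − μ(s)/3 − p(s)) tends to 1 along l, then the function s ↦ |E(s)| / (μ(s) + p(s)) tends to +∞ along l. -/
open Filter

/-- Analytic core of Proposition 4: if, eventually along `l`, the strong energy
condition holds (`μ ≥ 0`, `μ + 3p ≥ 0`) and `μ + p > 0`, and the slope of the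
apparent horizon `((2/3)μ + E)/(E − μ/3 − p)` tends to `1` along `l`, then
`|E|/(μ + p)` tends to `+∞` along `l`. -/
theorem slope_one_implies_weyl_ratio_diverges
    {α : Type*} (l : Filter α) (μ p E : α → ℝ)
    (h1 : ∀ᶠ s in l, 0 ≤ μ s)
    (h2 : ∀ᶠ s in l, 0 ≤ μ s + 3 * p s)
    (h3 : ∀ᶠ s in l, 0 < μ s + p s)
    (hslope : Tendsto (fun s => ((2/3) * μ s + E s) / (E s - μ s / 3 - p s)) l (nhds 1)) :
    Tendsto (fun s => |E s| / (μ s + p s)) l atTop := by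
  set D : α → ℝ := fun s => E s - μ s / 3 - p s with hD
  -- eventually the slope is nonzero, hence D ≠ 0
  have hne : ∀ᶠ s in l, ((2/3) * μ s + E s) / D s ≠ 0 :=
    hslope.eventually_ne (by norm_num)
  have hDne : ∀ᶠ s in l, D s ≠ 0 := by
    filter_upwards [hne] with s hs
    intro h
    apply hs
    rw [h, div_zero]
  -- eventually (μ+p)/D = slope - 1
  have heq : ∀ᶠ s in l, (μ s + p s) / D s
      = ((2/3) * μ s + E s) / D s - 1 := by
    filter_upwards [hDne] with s hs
    have hnum : (2/3) * μ s + E s - D s = μ s + p s := by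
      simp only [hD]; ring
    rw [div_sub_one hs, hnum]
  have hzero : Tendsto (fun s => (μ s + p s) / D s) l (nhds 0) := by
    have := (hslope.sub (tendsto_const_nhds (x := (1:ℝ))))
    simp only [sub_self] at this
    exact this.congr' (heq.mono fun s hs => hs.symm)
  -- hence |(μ+p)/D| → 0 within (0,∞), so D/(μ+p) in abs → ∞
  have habs : Tendsto (fun s => |(μ s + p s) / D s|) l (nhds 0) := by
    simpa using hzero.abs
  have hpos : ∀ᶠ s in l, 0 < |(μ s + p s) / D s| := by
    filter_upwards [h3, hDne] with s h3s hs
    exact abs_pos.mpr (div_ne_zero h3s.ne' hs)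
  have hwithin : Tendsto (fun s => |(μ s + p s) / D s|) l (nhdsWithin 0 (Set.Ioi 0)) :=
    tendsto_nhdsWithin_of_tendsto_nhds_of_eventually_within _ habs hpos
  have hinv : Tendsto (fun s => (|(μ s + p s) / D s|)⁻¹) l atTop :=
    hwithin.inv_tendsto_nhdsGT_zero
  -- (|(μ+p)/D|)⁻¹ = |D|/(μ+p)
  have hinv' : Tendsto (fun s => |D s| / (μ s + p s)) l atTop := by
    refine hinv.congr' ?_
    filter_upwards [h3] with s h3s
    rw [abs_div, abs_of_pos h3s, inv_div]
  -- finally |E| ≥ |D| - (μ+p) under SEC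
  have hfinal : Tendsto (fun s => |D s| / (μ s + p s) - 1) l atTop :=
    hinv'.atTop_add tendsto_const_nhds
  refine tendsto_atTop_mono' l ?_ hfinal
  filter_upwards [h1, h2, h3] with s h1s h2s h3s
  have hc : 0 ≤ μ s / 3 + p s := by linarith
  have hE : |D s| - (μ s + p s) ≤ |E s| := by
    have : E s = D s + (μ s / 3 + p s) := by simp only [hD]; ring
    rw [this]
    have h4 : |D s| ≤ |D s + (μ s / 3 + p s)| + |μ s / 3 + p s| := by
      have h5 := abs_add_le (D s + (μ s / 3 + p s)) (-(μ s / 3 + p s))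
      rw [add_neg_cancel_right, abs_neg] at h5
      exact h5
    rw [abs_of_nonneg hc] at h4
    linarith
  calc |D s| / (μ s + p s) - 1
      = (|D s| - (μ s + p s)) / (μ s + p s) := by
        field_simp
    _ ≤ |E s| / (μ s + p s) := by gcongr
end

section
/- Let μ, p : ℝ satisfy μ ≥ 0, μ + 3p ≥ 0 and μ + p > 0. Then ((2/3)·μ)/(−μ/3 − p) < 1. Equivalently (contrapositive form of the Corollary): if μ ≥ 0, μ + 3p ≥ 0 and ((2/3)·μ)/(−μ/3 − p) ≥ 1, then μ + p ≤ 0. -/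
lemma slope_nonpos (μ p : ℝ) (hμ : 0 ≤ μ) (hsec : 0 ≤ μ + 3 * p) :
    ((2/3) * μ) / (-(μ / 3) - p) ≤ 0 := by
  apply div_nonpos_of_nonneg_of_nonpos
  · positivity
  · linarith

/-- Algebraic core of Corollary 1: for a conformally flat perfect fluid the
horizon slope is `(2μ/3)/(−μ/3 − p)`; under the strong energy condition with
`μ + p > 0` this slope is `< 1`, and equivalently (contrapositive form) if the
slope is `≥ 1` then `μ + p ≤ 0`. -/
theorem conformally_flat_slope_lt_one :
    (∀ μ p : ℝ, 0 ≤ μ → 0 ≤ μ + 3 * p → 0 < μ + p →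
      ((2/3) * μ) / (-(μ / 3) - p) < 1) ∧
    (∀ μ p : ℝ, 0 ≤ μ → 0 ≤ μ + 3 * p →
      1 ≤ ((2/3) * μ) / (-(μ / 3) - p) → μ + p ≤ 0) := by
  constructor
  · intro μ p hμ hsec _
    have := slope_nonpos μ p hμ hsec
    linarith
  · intro μ p hμ hsec h
    have := slope_nonpos μ p hμ hsec
    linarith
end

section
/- Let M₀ > 0 and M₂ < 0 be real numbers, and define M(r) = M₀ + M₂·r² and t_h(r) = 2/(3·√(M(r))) − (2/3)·r³·M(r). Then there exists δ > 0 such that for all r with 0 < r < δ, one has M(r) > 0 and t_h(r) > 2/(3·√M₀). -/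
/-- LTB collapse with `M(r) = M₀ + M₂r²` and `M₂ < 0`: near the centre, shells
become trapped only after the central singularity time `2/(3√M₀)`, so the
central singularity is locally naked. -/
theorem ltb_naked_singularity (M₀ M₂ : ℝ) (hM₀ : 0 < M₀) (hM₂ : M₂ < 0) :
    ∃ δ > 0, ∀ r : ℝ, 0 < r → r < δ →
      0 < M₀ + M₂ * r ^ 2 ∧
      2 / (3 * Real.sqrt (M₀ + M₂ * r ^ 2)) - (2/3) * r ^ 3 * (M₀ + M₂ * r ^ 2)
        > 2 / (3 * Real.sqrt M₀) := by
  have hM₂' : 0 < -M₂ := by linarith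
  set s₀ := Real.sqrt M₀ with hs₀def
  have hs₀ : 0 < s₀ := Real.sqrt_pos.mpr hM₀
  have hs₀2 : s₀ ^ 2 = M₀ := Real.sq_sqrt hM₀.le
  refine ⟨min (Real.sqrt (M₀ / (-M₂))) ((-M₂) / (2 * M₀ ^ 2 * s₀)), ?_, ?_⟩
  · exact lt_min (Real.sqrt_pos.mpr (div_pos hM₀ hM₂'))
      (div_pos hM₂' (by positivity))
  intro r hr hrδ
  have hr1 : r < Real.sqrt (M₀ / (-M₂)) := lt_of_lt_of_le hrδ (min_le_left _ _)
  have hr2 : r < (-M₂) / (2 * M₀ ^ 2 * s₀) := lt_of_lt_of_le hrδ (min_le_right _ _)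
  have hr2' : 2 * M₀ ^ 2 * s₀ * r < -M₂ := by
    have := (lt_div_iff₀ (show (0:ℝ) < 2 * M₀ ^ 2 * s₀ by positivity)).mp hr2
    linarith
  have hrsq : r ^ 2 < M₀ / (-M₂) := (Real.lt_sqrt hr.le).mp hr1
  have hMr : 0 < M₀ + M₂ * r ^ 2 := by
    have := (lt_div_iff₀ hM₂').mp hrsq
    nlinarith
  refine ⟨hMr, ?_⟩
  set s := Real.sqrt (M₀ + M₂ * r ^ 2) with hsdef
  have hs : 0 < s := Real.sqrt_pos.mpr hMr
  have hs2 : s ^ 2 = M₀ + M₂ * r ^ 2 := Real.sq_sqrt hMr.le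
  have hss₀ : s ≤ s₀ := Real.sqrt_le_sqrt (by nlinarith)
  -- key inequality: s₀ - s > r^3 * s^3 * s₀
  have key : r ^ 3 * s ^ 3 * s₀ < s₀ - s := by
    have h1 : (s₀ - s) * (s₀ + s) = -M₂ * r ^ 2 := by nlinarith
    have hs3 : s ^ 3 ≤ s₀ ^ 3 := pow_le_pow_left₀ hs.le hss₀ 3
    have hs4 : s ^ 4 ≤ s₀ ^ 4 := pow_le_pow_left₀ hs.le hss₀ 4
    have h2a : s ^ 3 * (s₀ + s) ≤ 2 * M₀ ^ 2 := by
      nlinarith [mul_le_mul_of_nonneg_right hs3 hs₀.le, hs₀2]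
    have h2 : r ^ 3 * s ^ 3 * s₀ * (s₀ + s) ≤ 2 * M₀ ^ 2 * s₀ * r ^ 3 := by
      nlinarith [mul_le_mul_of_nonneg_left h2a (show (0:ℝ) ≤ r ^ 3 * s₀ by positivity)]
    have h3 : 2 * M₀ ^ 2 * s₀ * r ^ 3 < -M₂ * r ^ 2 := by
      nlinarith [pow_pos hr 2]
    have h4 : r ^ 3 * s ^ 3 * s₀ * (s₀ + s) < (s₀ - s) * (s₀ + s) := by
      rw [h1]; linarith
    have h5 : 0 < s₀ + s := by linarith
    exact lt_of_mul_lt_mul_right h4 h5.le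
  rw [← hs2]
  have heq : 2 / (3 * s) - (2/3) * r ^ 3 * s ^ 2 - 2 / (3 * s₀)
      = 2 * ((s₀ - s) - r ^ 3 * s ^ 3 * s₀) / (3 * s * s₀) := by
    field_simp
    ring
  have hpos : 0 < 2 * ((s₀ - s) - r ^ 3 * s ^ 3 * s₀) / (3 * s * s₀) := by
    apply div_pos
    · linarith
    · positivity
  linarith [heq ▸ hpos]
end

section
/- Let M₀ > 0 and M₂ < 0 be real numbers. Define M(r) = M₀ + M₂·r², F(r) = r³·M(r), t_h(r) = 2/(3·√(M(r))) − (2/3)·r³·M(r), and R(ρ,t) = ρ·(1 − (3/2)·√(M(ρ))·t)^(2/3). Then the function r ↦ 1 − (deriv F r) / (deriv (fun ρ => R(ρ, t_h(r))) r) tends to 1 as r tends to 0 from the right (i.e. along the filter 𝓝[>] 0). -/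
open Filter

/-- LTB collapse with `M(r) = M₀ + M₂r²`, `M₂ < 0`: the slope of the tangent to
the apparent horizon at the central singularity, `1 − F′/R′` evaluated along the
apparent-horizon time `t_h(r)`, tends to `1` as `r → 0⁺` (marginally naked). -/
theorem ltb_horizon_slope_limit (M₀ M₂ : ℝ) (hM₀ : 0 < M₀) (hM₂ : M₂ < 0) :
    Tendsto (fun r : ℝ =>
        1 - deriv (fun ρ : ℝ => ρ ^ 3 * (M₀ + M₂ * ρ ^ 2)) r /
          deriv (fun ρ : ℝ => ρ * (1 - (3/2) * Real.sqrt (M₀ + M₂ * ρ ^ 2) *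
            (2 / (3 * Real.sqrt (M₀ + M₂ * r ^ 2)) - (2/3) * r ^ 3 * (M₀ + M₂ * r ^ 2)))
              ^ ((2:ℝ)/3)) r)
      (nhdsWithin 0 (Set.Ioi 0)) (nhds 1) := by
  set M : ℝ → ℝ := fun r => M₀ + M₂ * r ^ 2 with hM
  set g : ℝ → ℝ := fun r =>
    1 - (M₀ * (3 * r) + M₂ * (5 * r ^ 3)) /
        (r * M r - (2 / (3 * Real.sqrt (M r)) - (2/3) * r ^ 3 * M r) * M₂ / M r) with hgdef
  have hM0 : M 0 = M₀ := by simp [hM]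
  have hMcont : Continuous M := by fun_prop
  -- Part B : Tendsto g (𝓝[>]0) (𝓝 1)
  have hBden : Tendsto (fun r : ℝ =>
      r * M r - (2 / (3 * Real.sqrt (M r)) - (2/3) * r ^ 3 * M r) * M₂ / M r) (nhds 0)
      (nhds (0 * M 0 - (2 / (3 * Real.sqrt (M 0)) - (2/3) * 0 ^ 3 * M 0) * M₂ / M 0)) := by
    have h1 : ContinuousAt (fun r : ℝ =>
        r * M r - (2 / (3 * Real.sqrt (M r)) - (2/3) * r ^ 3 * M r) * M₂ / M r) 0 := by
      have hs : (3 : ℝ) * Real.sqrt (M 0) ≠ 0 := by rw [hM0]; positivity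
      have hm : M 0 ≠ 0 := by rw [hM0]; exact hM₀.ne'
      fun_prop (disch := first | exact hs | exact hm)
    exact h1
  have hBnum : Tendsto (fun r : ℝ => M₀ * (3 * r) + M₂ * (5 * r ^ 3)) (nhds 0)
      (nhds (M₀ * (3 * 0) + M₂ * (5 * 0 ^ 3))) :=
    Continuous.tendsto (by fun_prop) 0
  have hdenne : 0 * M 0 - (2 / (3 * Real.sqrt (M 0)) - (2/3) * 0 ^ 3 * M 0) * M₂ / M 0 ≠ 0 := by
    rw [hM0]
    have hs : 0 < Real.sqrt M₀ := Real.sqrt_pos.mpr hM₀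
    have h2 : (0:ℝ) * M₀ - (2 / (3 * Real.sqrt M₀) - (2/3) * 0 ^ 3 * M₀) * M₂ / M₀
        = 2 / (3 * Real.sqrt M₀) * (-M₂) / M₀ := by ring
    rw [h2]
    exact (div_pos (mul_pos (by positivity) (neg_pos.mpr hM₂)) hM₀).ne'
  have hgB : Tendsto g (nhdsWithin 0 (Set.Ioi 0)) (nhds 1) := by
    have h3 := (hBnum.div hBden hdenne).const_sub 1
    have h2 : (1 : ℝ) - (M₀ * (3 * (0:ℝ)) + M₂ * (5 * (0:ℝ) ^ 3)) /
        (0 * M 0 - (2 / (3 * Real.sqrt (M 0)) - (2/3) * (0:ℝ) ^ 3 * M 0) * M₂ / M 0) = 1 := by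
      norm_num
    rw [h2] at h3
    exact h3.mono_left nhdsWithin_le_nhds
  -- Part A : eventual equality
  have hMpos : ∀ᶠ r in nhdsWithin (0:ℝ) (Set.Ioi 0), 0 < M r := by
    have h := (hMcont.tendsto 0).mono_left (nhdsWithin_le_nhds (s := Set.Ioi (0:ℝ)))
    rw [hM0] at h
    exact h.eventually (eventually_gt_nhds hM₀)
  have heq : ∀ᶠ r in nhdsWithin (0:ℝ) (Set.Ioi 0),
      g r = 1 - deriv (fun ρ : ℝ => ρ ^ 3 * (M₀ + M₂ * ρ ^ 2)) r /
          deriv (fun ρ : ℝ => ρ * (1 - (3/2) * Real.sqrt (M₀ + M₂ * ρ ^ 2) *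
            (2 / (3 * Real.sqrt (M₀ + M₂ * r ^ 2)) - (2/3) * r ^ 3 * (M₀ + M₂ * r ^ 2)))
              ^ ((2:ℝ)/3)) r := by
    filter_upwards [self_mem_nhdsWithin, hMpos] with r hr hMr
    have hrpos : 0 < r := hr
    set s : ℝ := Real.sqrt (M r) with hsdef
    have hspos : 0 < s := Real.sqrt_pos.mpr hMr
    have hsq : s * s = M r := Real.mul_self_sqrt hMr.le
    set c : ℝ := 2 / (3 * s) - (2/3) * r ^ 3 * M r with hcdef
    set v : ℝ := r * s with hvdef
    have hvpos : 0 < v := mul_pos hrpos hspos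
    -- change the goal to the M-version (definitional)
    show (1:ℝ) - (M₀ * (3 * r) + M₂ * (5 * r ^ 3)) / (r * M r - c * M₂ / M r)
        = 1 - deriv (fun ρ : ℝ => ρ ^ 3 * M ρ) r /
          deriv (fun ρ : ℝ => ρ * (1 - (3/2) * Real.sqrt (M ρ) * c) ^ ((2:ℝ)/3)) r
    -- derivative of F
    have hF : deriv (fun ρ : ℝ => ρ ^ 3 * M ρ) r = M₀ * (3 * r ^ 2) + M₂ * (5 * r ^ 4) := by
      have h1 : HasDerivAt (fun ρ : ℝ => ρ ^ 3 * M ρ)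
          (M₀ * (3 * r ^ 2) + M₂ * (5 * r ^ 4)) r := by
        have h2 := (hasDerivAt_pow 3 r).mul (((hasDerivAt_pow 2 r).const_mul M₂).const_add M₀)
        refine h2.congr_deriv ?_
        push_cast
        ring
      exact h1.deriv
    -- derivative of R
    have hMd : HasDerivAt M (M₂ * (2 * r)) r := by
      have h2 := ((hasDerivAt_pow 2 r).const_mul M₂).const_add M₀
      refine h2.congr_deriv ?_
      push_cast
      ring
    have hsd : HasDerivAt (fun ρ => Real.sqrt (M ρ)) (M₂ * (2 * r) / (2 * s)) r :=
      hMd.sqrt hMr.ne'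
    set u' : ℝ := -((3/2) * (M₂ * (2 * r) / (2 * s)) * c) with hu'def
    have hu : HasDerivAt (fun ρ => 1 - (3/2) * Real.sqrt (M ρ) * c) u' r :=
      ((hsd.const_mul ((3:ℝ)/2)).mul_const c).const_sub 1
    have hur : 1 - (3/2) * s * c = v ^ 3 := by
      rw [hcdef, hvdef, ← hsq]
      field_simp
      ring
    have hupos : 0 < 1 - (3/2) * s * c := by rw [hur]; positivity
    have hpow : HasDerivAt (fun ρ => (1 - (3/2) * Real.sqrt (M ρ) * c) ^ ((2:ℝ)/3))
        (u' * ((2:ℝ)/3) * (1 - (3/2) * s * c) ^ ((2:ℝ)/3 - 1)) r :=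
      hu.rpow_const (Or.inl hupos.ne')
    have hR : HasDerivAt (fun ρ => ρ * (1 - (3/2) * Real.sqrt (M ρ) * c) ^ ((2:ℝ)/3))
        (1 * (1 - (3/2) * s * c) ^ ((2:ℝ)/3)
          + r * (u' * ((2:ℝ)/3) * (1 - (3/2) * s * c) ^ ((2:ℝ)/3 - 1))) r :=
      (hasDerivAt_id r).mul hpow
    have h23 : (1 - (3/2) * s * c) ^ ((2:ℝ)/3) = v ^ 2 := by
      rw [hur, ← Real.rpow_natCast v 3, ← Real.rpow_mul hvpos.le]
      norm_num
    have h13 : (1 - (3/2) * s * c) ^ ((2:ℝ)/3 - 1) = v⁻¹ := by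
      rw [hur, ← Real.rpow_natCast v 3, ← Real.rpow_mul hvpos.le]
      norm_num [Real.rpow_neg_one]
    have hRval : deriv (fun ρ : ℝ => ρ * (1 - (3/2) * Real.sqrt (M ρ) * c) ^ ((2:ℝ)/3)) r
        = v ^ 2 + r * (u' * ((2:ℝ)/3) * v⁻¹) := by
      rw [hR.deriv, h23, h13]; ring
    rw [hF, hRval]
    congr 1
    have hDv : v ^ 2 + r * (u' * ((2:ℝ)/3) * v⁻¹) = r * (r * M r - c * M₂ / M r) := by
      rw [hu'def, hcdef, hvdef, ← hsq]
      field_simp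
      ring
    rw [hDv]
    have hnum : M₀ * (3 * r ^ 2) + M₂ * (5 * r ^ 4)
        = r * (M₀ * (3 * r) + M₂ * (5 * r ^ 3)) := by ring
    rw [hnum, mul_div_mul_left _ _ hrpos.ne']
  exact hgB.congr' heq
end

section
/- Let M₀ > 0 and M₂ be real numbers. Define M(r) = M₀ + M₂·r², F(r) = r³·M(r), and R(ρ,t) = ρ·(1 − (3/2)·√(M(ρ))·t)^(2/3). Then for every fixed t with 0 < t < 2/(3·√M₀), the function r ↦ 1 − (deriv F r) / (deriv (fun ρ => R(ρ, t)) r) tends to 1 as r tends to 0 from the right (i.e. along the filter 𝓝[>] 0). -/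
open Filter

/-- LTB collapse with `M(r) = M₀ + M₂r²`: for every fixed time `t` before the
central singularity time `2/(3√M₀)`, the quantity `1 − F′/R′` tends to `1` as
`r → 0⁺` (inner limit of the iterated-limit slope computation). -/
theorem ltb_inner_limit (M₀ M₂ : ℝ) (hM₀ : 0 < M₀) :
    ∀ t : ℝ, 0 < t → t < 2 / (3 * Real.sqrt M₀) →
      Tendsto (fun r : ℝ =>
          1 - deriv (fun ρ : ℝ => ρ ^ 3 * (M₀ + M₂ * ρ ^ 2)) r /
            deriv (fun ρ : ℝ => ρ * (1 - (3/2) * Real.sqrt (M₀ + M₂ * ρ ^ 2) * t)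
              ^ ((2:ℝ)/3)) r)
        (nhdsWithin 0 (Set.Ioi 0)) (nhds 1) := by
  intro t ht htlt
  set m : ℝ → ℝ := fun ρ => M₀ + M₂ * ρ ^ 2 with hm
  set u : ℝ → ℝ := fun ρ => 1 - (3/2) * Real.sqrt (m ρ) * t with hudef
  have hsqrtM₀ : 0 < Real.sqrt M₀ := Real.sqrt_pos.2 hM₀
  have hm0 : m 0 = M₀ := by simp [hm]
  have hu0 : 0 < u 0 := by
    have h1 : (3/2) * Real.sqrt M₀ * t < 1 := by
      have h3 : 0 < 3 * Real.sqrt M₀ := by positivity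
      rw [lt_div_iff₀ h3] at htlt
      nlinarith
    simp only [hudef, hm0]
    linarith
  have hmc : Continuous m := by fun_prop
  have huc : Continuous u := by
    exact continuous_const.sub ((continuous_const.mul hmc.sqrt).mul continuous_const)
  -- eventually positivity near 0
  have hmev : ∀ᶠ ρ in nhds (0:ℝ), 0 < m ρ :=
    (hmc.continuousAt (x := (0:ℝ))).eventually_const_lt (by rw [hm0]; exact hM₀)
  have huev : ∀ᶠ ρ in nhds (0:ℝ), 0 < u ρ :=
    (huc.continuousAt (x := (0:ℝ))).eventually_const_lt hu0
  -- explicit derivative of R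
  set u' : ℝ → ℝ := fun ρ => -((3/2) * (M₂ * (2 * ρ) / (2 * Real.sqrt (m ρ))) * t) with hu'def
  set φ : ℝ → ℝ := fun ρ =>
    1 * u ρ ^ ((2:ℝ)/3) + ρ * (u' ρ * ((2:ℝ)/3) * u ρ ^ ((2:ℝ)/3 - 1)) with hφdef
  have hmderiv : ∀ ρ : ℝ, HasDerivAt m (M₂ * (2 * ρ)) ρ := by
    intro ρ
    have h1 : HasDerivAt (fun ρ : ℝ => ρ ^ 2) ((2:ℕ) * ρ ^ (2-1)) ρ := hasDerivAt_pow 2 ρ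
    have := (h1.const_mul M₂).const_add M₀
    simpa [hm, mul_comm, mul_assoc, mul_left_comm] using this
  have hRderiv : ∀ ρ : ℝ, 0 < m ρ → 0 < u ρ →
      HasDerivAt (fun ρ : ℝ => ρ * u ρ ^ ((2:ℝ)/3)) (φ ρ) ρ := by
    intro ρ hmρ huρ
    have hs : HasDerivAt (fun ρ => Real.sqrt (m ρ))
        (M₂ * (2 * ρ) / (2 * Real.sqrt (m ρ))) ρ :=
      (hmderiv ρ).sqrt (ne_of_gt hmρ)
    have hud : HasDerivAt u (u' ρ) ρ := by
      have := (((hs.const_mul ((3:ℝ)/2)).mul_const t).const_sub 1)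
      simpa [hudef, hu'def, mul_comm, mul_assoc, mul_left_comm] using this
    have hpow : HasDerivAt (fun ρ => u ρ ^ ((2:ℝ)/3))
        (u' ρ * ((2:ℝ)/3) * u ρ ^ ((2:ℝ)/3 - 1)) ρ :=
      hud.rpow_const (Or.inl (ne_of_gt huρ))
    exact (hasDerivAt_id' ρ).mul hpow
  -- tendsto of deriv R to positive limit
  set L : ℝ := u 0 ^ ((2:ℝ)/3) with hL
  have hLpos : 0 < L := Real.rpow_pos_of_pos hu0 _
  have hφ0 : φ 0 = L := by simp [hφdef, hL]
  have hφcont : ContinuousAt φ 0 := by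
    have hsm : Real.sqrt (m 0) ≠ 0 := by rw [hm0]; exact ne_of_gt hsqrtM₀
    have hu'c : ContinuousAt u' 0 := by
      apply ContinuousAt.neg
      apply ContinuousAt.mul _ continuousAt_const
      apply ContinuousAt.mul continuousAt_const
      exact ContinuousAt.div (by fun_prop) (by fun_prop)
        (by simpa using mul_ne_zero two_ne_zero hsm)
    have h1 : ContinuousAt (fun ρ => u ρ ^ ((2:ℝ)/3)) 0 :=
      (huc.continuousAt).rpow_const (Or.inl (ne_of_gt hu0))
    have h2 : ContinuousAt (fun ρ => u ρ ^ ((2:ℝ)/3 - 1)) 0 :=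
      (huc.continuousAt).rpow_const (Or.inl (ne_of_gt hu0))
    exact ((continuousAt_const.mul h1).add
      (continuousAt_id.mul ((hu'c.mul continuousAt_const).mul h2)))
  have hRt : Tendsto (deriv (fun ρ : ℝ => ρ * u ρ ^ ((2:ℝ)/3)))
      (nhdsWithin 0 (Set.Ioi 0)) (nhds L) := by
    have heq : ∀ᶠ ρ in nhdsWithin (0:ℝ) (Set.Ioi 0),
        φ ρ = deriv (fun ρ : ℝ => ρ * u ρ ^ ((2:ℝ)/3)) ρ := by
      filter_upwards [nhdsWithin_le_nhds hmev, nhdsWithin_le_nhds huev] with ρ h1 h2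
      exact ((hRderiv ρ h1 h2).deriv).symm
    refine Tendsto.congr' heq ?_
    have h := tendsto_nhdsWithin_of_tendsto_nhds (s := Set.Ioi (0:ℝ)) hφcont.tendsto
    rwa [hφ0] at h
  -- deriv of F
  set ψ : ℝ → ℝ := fun ρ => (3:ℕ) * ρ ^ 2 * (M₀ + M₂ * ρ ^ 2) + ρ ^ 3 * (M₂ * (2 * ρ))
    with hψdef
  have hFderiv : ∀ ρ : ℝ, deriv (fun ρ : ℝ => ρ ^ 3 * (M₀ + M₂ * ρ ^ 2)) ρ = ψ ρ := by
    intro ρ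
    have h1 : HasDerivAt (fun ρ : ℝ => ρ ^ 3) ((3:ℕ) * ρ ^ (3-1)) ρ := hasDerivAt_pow 3 ρ
    have := h1.mul (hmderiv ρ)
    exact this.deriv.trans (by simp [hψdef, hm])
  have hFt : Tendsto (deriv (fun ρ : ℝ => ρ ^ 3 * (M₀ + M₂ * ρ ^ 2)))
      (nhdsWithin 0 (Set.Ioi 0)) (nhds 0) := by
    have hψc : Continuous ψ := by fun_prop
    have hψ0 : ψ 0 = 0 := by simp [hψdef]
    have : Tendsto ψ (nhdsWithin 0 (Set.Ioi 0)) (nhds 0) := by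
      have h := tendsto_nhdsWithin_of_tendsto_nhds (s := Set.Ioi (0:ℝ))
        ((hψc.continuousAt (x := (0:ℝ))).tendsto)
      rwa [hψ0] at h
    exact this.congr fun ρ => (hFderiv ρ).symm
  have hdiv : Tendsto (fun r : ℝ =>
      deriv (fun ρ : ℝ => ρ ^ 3 * (M₀ + M₂ * ρ ^ 2)) r /
        deriv (fun ρ : ℝ => ρ * u ρ ^ ((2:ℝ)/3)) r)
      (nhdsWithin 0 (Set.Ioi 0)) (nhds 0) := by
    have := hFt.div hRt (ne_of_gt hLpos)
    rw [zero_div] at this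
    exact this
  have := tendsto_const_nhds (α := ℝ) (x := (1:ℝ))
      (f := nhdsWithin (0:ℝ) (Set.Ioi 0)) |>.sub hdiv
  simpa [hudef, hm] using this
end

section
/- Let M₀ > 0 and M₂ < 0 be real numbers. Define M(r) = M₀ + M₂·r², F(r) = r³·M(r), t_h(r) = 2/(3·√(M(r))) − (2/3)·r³·M(r), R(ρ,t) = ρ·(1 − (3/2)·√(M(ρ))·t)^(2/3), the energy density along the horizon μ(r) = (deriv F r) / ( R(r, t_h(r))² · deriv (fun ρ => R(ρ, t_h(r))) r ), and the electric Weyl scalar along the horizon 𝓔(r) = μ(r)/3 − F(r)/R(r, t_h(r))³. Then the function r ↦ 𝓔(r)/μ(r) tends to −∞ as r tends to 0 from the right (i.e. along the filter 𝓝[>] 0); in particular r ↦ |𝓔(r)|/μ(r) tends to +∞. -/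
open Filter

/-- Mass function of the LTB model: `M(r) = M₀ + M₂ r²`. -/
noncomputable def ltbM (M₀ M₂ r : ℝ) : ℝ := M₀ + M₂ * r ^ 2

/-- Misner–Sharp mass: `F(r) = r³ M(r)`. -/
noncomputable def ltbF (M₀ M₂ r : ℝ) : ℝ := r ^ 3 * ltbM M₀ M₂ r

/-- Apparent-horizon time: `t_h(r) = 2/(3√M(r)) − (2/3) r³ M(r)`. -/
noncomputable def ltbTh (M₀ M₂ r : ℝ) : ℝ :=
  2 / (3 * Real.sqrt (ltbM M₀ M₂ r)) - (2/3) * r ^ 3 * ltbM M₀ M₂ r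

/-- Area radius: `R(ρ,t) = ρ (1 − (3/2)√M(ρ) t)^(2/3)`. -/
noncomputable def ltbR (M₀ M₂ ρ t : ℝ) : ℝ :=
  ρ * (1 - (3/2) * Real.sqrt (ltbM M₀ M₂ ρ) * t) ^ ((2:ℝ)/3)

/-- Energy density along the apparent horizon, from the field equation
`F′ = μ R² R′`: `μ(r) = F′/(R² R′)` evaluated at `(r, t_h(r))`. -/
noncomputable def ltbMu (M₀ M₂ r : ℝ) : ℝ :=
  deriv (ltbF M₀ M₂) r /
    ((ltbR M₀ M₂ r (ltbTh M₀ M₂ r)) ^ 2 *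
      deriv (fun ρ => ltbR M₀ M₂ ρ (ltbTh M₀ M₂ r)) r)

/-- Electric Weyl scalar along the apparent horizon:
`𝓔(r) = μ(r)/3 − F(r)/R(r, t_h(r))³`. -/
noncomputable def ltbE (M₀ M₂ r : ℝ) : ℝ :=
  ltbMu M₀ M₂ r / 3 - ltbF M₀ M₂ r / (ltbR M₀ M₂ r (ltbTh M₀ M₂ r)) ^ 3

lemma key_horizon (M₀ M₂ r : ℝ) (hm : 0 < ltbM M₀ M₂ r) :
    1 - (3/2) * Real.sqrt (ltbM M₀ M₂ r) * ltbTh M₀ M₂ r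
      = (r * Real.sqrt (ltbM M₀ M₂ r)) ^ 3 := by
  have hsq : Real.sqrt (ltbM M₀ M₂ r) * Real.sqrt (ltbM M₀ M₂ r) = ltbM M₀ M₂ r :=
    Real.mul_self_sqrt hm.le
  have h0 : Real.sqrt (ltbM M₀ M₂ r) ≠ 0 := ne_of_gt (Real.sqrt_pos.mpr hm)
  unfold ltbTh
  field_simp
  linear_combination (-(r^3 * Real.sqrt (ltbM M₀ M₂ r))) * hsq

lemma horizon_R (M₀ M₂ r : ℝ) (hr : 0 < r) (hm : 0 < ltbM M₀ M₂ r) :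
    ltbR M₀ M₂ r (ltbTh M₀ M₂ r) = r ^ 3 * ltbM M₀ M₂ r := by
  have hs : 0 < r * Real.sqrt (ltbM M₀ M₂ r) :=
    mul_pos hr (Real.sqrt_pos.mpr hm)
  unfold ltbR
  rw [key_horizon M₀ M₂ r hm, ← Real.rpow_natCast (r * Real.sqrt (ltbM M₀ M₂ r)) 3,
    ← Real.rpow_mul hs.le]
  norm_num
  rw [mul_pow, Real.sq_sqrt hm.le]
  ring

lemma deriv_ltbF (M₀ M₂ r : ℝ) :
    deriv (ltbF M₀ M₂) r = r ^ 2 * (3 * M₀ + 5 * M₂ * r ^ 2) := by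
  have h : HasDerivAt (ltbF M₀ M₂) (r ^ 2 * (3 * M₀ + 5 * M₂ * r ^ 2)) r := by
    have h1 : HasDerivAt (fun x : ℝ => x ^ 3 * (M₀ + M₂ * x ^ 2))
        ((3 * r ^ 2) * (M₀ + M₂ * r ^ 2) + r ^ 3 * (M₂ * (2 * r))) r := by
      have ha : HasDerivAt (fun x : ℝ => x ^ 3) (3 * r ^ 2) r := by
        simpa using hasDerivAt_pow 3 r
      have hb : HasDerivAt (fun x : ℝ => M₀ + M₂ * x ^ 2) (M₂ * (2 * r)) r := by
        have := ((hasDerivAt_pow 2 r).const_mul M₂).const_add M₀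
        simpa using this
      exact ha.mul hb
    have : (fun x : ℝ => x ^ 3 * (M₀ + M₂ * x ^ 2)) = ltbF M₀ M₂ := by
      funext x; simp [ltbF, ltbM]
    rw [this] at h1
    convert h1 using 1; ring
  exact h.deriv

lemma key_horizon' (M₀ M₂ r : ℝ) (hm : 0 < ltbM M₀ M₂ r) :
    1 - (3/2) * Real.sqrt (ltbM M₀ M₂ r) * ltbTh M₀ M₂ r
      = (r * Real.sqrt (ltbM M₀ M₂ r)) ^ 3 := by
  have hsq : Real.sqrt (ltbM M₀ M₂ r) * Real.sqrt (ltbM M₀ M₂ r) = ltbM M₀ M₂ r :=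
    Real.mul_self_sqrt hm.le
  have h0 : Real.sqrt (ltbM M₀ M₂ r) ≠ 0 := ne_of_gt (Real.sqrt_pos.mpr hm)
  unfold ltbTh
  field_simp
  linear_combination (-(r^3 * Real.sqrt (ltbM M₀ M₂ r))) * hsq

lemma deriv_ltbR (M₀ M₂ r : ℝ) (hr : 0 < r) (hm : 0 < ltbM M₀ M₂ r) :
    deriv (fun ρ => ltbR M₀ M₂ ρ (ltbTh M₀ M₂ r)) r
      = r ^ 2 * ltbM M₀ M₂ r - ltbTh M₀ M₂ r * M₂ * r / ltbM M₀ M₂ r := by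
  set t := ltbTh M₀ M₂ r with ht
  set m := ltbM M₀ M₂ r with hmdef
  set s := r * Real.sqrt m with hsdef
  have hsp : 0 < Real.sqrt m := Real.sqrt_pos.mpr hm
  have hs : 0 < s := mul_pos hr hsp
  have hsq : Real.sqrt m * Real.sqrt m = m := Real.mul_self_sqrt hm.le
  -- derivative of inner function
  have hMd : HasDerivAt (fun ρ : ℝ => M₀ + M₂ * ρ ^ 2) (M₂ * (2 * r)) r := by
    have := ((hasDerivAt_pow 2 r).const_mul M₂).const_add M₀
    simpa using this
  have hMr : M₀ + M₂ * r ^ 2 = m := rfl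
  have hsd : HasDerivAt (fun ρ : ℝ => Real.sqrt (M₀ + M₂ * ρ ^ 2))
      ((M₂ * (2 * r)) / (2 * Real.sqrt m)) r := by
    have := hMd.sqrt (show (fun ρ : ℝ => M₀ + M₂ * ρ ^ 2) r ≠ 0 from hm.ne')
    simpa [hMr] using this
  have hud : HasDerivAt (fun ρ : ℝ => 1 - (3/2) * Real.sqrt (M₀ + M₂ * ρ ^ 2) * t)
      (-((3/2) * ((M₂ * (2 * r)) / (2 * Real.sqrt m)) * t)) r := by
    have := ((hsd.const_mul ((3:ℝ)/2)).mul_const t).const_sub 1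
    convert this using 1 <;> ring
  have hu_val : 1 - (3/2) * Real.sqrt (M₀ + M₂ * r ^ 2) * t = s ^ 3 := by
    rw [show Real.sqrt (M₀ + M₂ * r ^ 2) = Real.sqrt m from rfl]
    exact key_horizon' M₀ M₂ r hm
  have hs3 : (0:ℝ) < s ^ 3 := pow_pos hs 3
  have hrd : HasDerivAt (fun ρ : ℝ =>
      (1 - (3/2) * Real.sqrt (M₀ + M₂ * ρ ^ 2) * t) ^ ((2:ℝ)/3))
      ((-((3/2) * ((M₂ * (2 * r)) / (2 * Real.sqrt m)) * t)) * ((2:ℝ)/3)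
        * (s ^ 3) ^ ((2:ℝ)/3 - 1)) r := by
    have := hud.rpow_const (p := (2:ℝ)/3) (Or.inl (by show 1 - (3/2) * Real.sqrt (M₀ + M₂ * r ^ 2) * t ≠ 0; rw [hu_val]; exact hs3.ne'))
    rw [hu_val] at this
    exact this
  have hfull : HasDerivAt (fun ρ : ℝ =>
      ρ * (1 - (3/2) * Real.sqrt (M₀ + M₂ * ρ ^ 2) * t) ^ ((2:ℝ)/3))
      (1 * ((s ^ 3) ^ ((2:ℝ)/3)) + r * ((-((3/2) * ((M₂ * (2 * r)) / (2 * Real.sqrt m)) * t)) * ((2:ℝ)/3)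
        * (s ^ 3) ^ ((2:ℝ)/3 - 1))) r := by
    have := (hasDerivAt_id r).mul hrd
    simp only [id_eq] at this
    rw [hu_val] at this
    exact this
  have heq : (fun ρ => ltbR M₀ M₂ ρ t) = (fun ρ : ℝ =>
      ρ * (1 - (3/2) * Real.sqrt (M₀ + M₂ * ρ ^ 2) * t) ^ ((2:ℝ)/3)) := by
    funext ρ; simp [ltbR, ltbM]
  rw [heq, hfull.deriv]
  -- now evaluate the rpow powers
  have hp1 : (s ^ 3 : ℝ) ^ ((2:ℝ)/3) = s ^ 2 := by
    rw [← Real.rpow_natCast s 3, ← Real.rpow_mul hs.le]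
    norm_num
  have hp2 : (s ^ 3 : ℝ) ^ ((2:ℝ)/3 - 1) = s⁻¹ := by
    rw [← Real.rpow_natCast s 3, ← Real.rpow_mul hs.le]
    norm_num [Real.rpow_neg_one]
  rw [hp1, hp2, hsdef]
  have h0 : Real.sqrt m ≠ 0 := hsp.ne'
  rw [mul_pow, Real.sq_sqrt hm.le]
  field_simp
  linear_combination (M₂ * t) * hsq

lemma B_pos (M₀ M₂ r : ℝ) (hM₂ : M₂ < 0) (hr : 0 < r) (hm : 0 < ltbM M₀ M₂ r)
    (ht : 0 < ltbTh M₀ M₂ r) :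
    0 < r ^ 2 * ltbM M₀ M₂ r - ltbTh M₀ M₂ r * M₂ * r / ltbM M₀ M₂ r := by
  have h1 : 0 < r ^ 2 * ltbM M₀ M₂ r := mul_pos (pow_pos hr 2) hm
  have h2 : ltbTh M₀ M₂ r * M₂ * r / ltbM M₀ M₂ r < 0 :=
    div_neg_of_neg_of_pos (mul_neg_of_neg_of_pos (mul_neg_of_pos_of_neg ht hM₂) hr) hm
  linarith

lemma mu_pos (M₀ M₂ r : ℝ) (hM₂ : M₂ < 0) (hr : 0 < r) (hm : 0 < ltbM M₀ M₂ r)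
    (ht : 0 < ltbTh M₀ M₂ r) (hq : 0 < 3 * M₀ + 5 * M₂ * r ^ 2) :
    0 < ltbMu M₀ M₂ r := by
  unfold ltbMu
  rw [horizon_R M₀ M₂ r hr hm, deriv_ltbF, deriv_ltbR M₀ M₂ r hr hm]
  have hB := B_pos M₀ M₂ r hM₂ hr hm ht
  have hF : 0 < r ^ 3 * ltbM M₀ M₂ r := mul_pos (pow_pos hr 3) hm
  positivity

lemma ratio_eq (M₀ M₂ r : ℝ) (hM₂ : M₂ < 0) (hr : 0 < r) (hm : 0 < ltbM M₀ M₂ r)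
    (ht : 0 < ltbTh M₀ M₂ r) (hq : 0 < 3 * M₀ + 5 * M₂ * r ^ 2) :
    ltbE M₀ M₂ r / ltbMu M₀ M₂ r
      = 1/3 - r⁻¹ * ((r * ltbM M₀ M₂ r - ltbTh M₀ M₂ r * M₂ / ltbM M₀ M₂ r)
          / (3 * M₀ + 5 * M₂ * r ^ 2)) := by
  unfold ltbE ltbMu
  rw [horizon_R M₀ M₂ r hr hm, deriv_ltbF, deriv_ltbR M₀ M₂ r hr hm,
    show ltbF M₀ M₂ r = r ^ 3 * ltbM M₀ M₂ r from rfl]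
  set m := ltbM M₀ M₂ r with hmdef
  set t := ltbTh M₀ M₂ r with htdef
  have hrne : r ≠ 0 := hr.ne'
  have hmne : m ≠ 0 := hm.ne'
  have hqne : (3 * M₀ + 5 * M₂ * r ^ 2) ≠ 0 := hq.ne'
  have hBeq : r ^ 2 * m - t * M₂ * r / m = (r ^ 2 * m ^ 2 - t * M₂ * r) / m := by
    field_simp
  have hB2 : 0 < r ^ 2 * m ^ 2 - t * M₂ * r := by
    have h1 : 0 < r ^ 2 * m ^ 2 := by positivity
    have h2 : t * M₂ * r < 0 := mul_neg_of_neg_of_pos (mul_neg_of_pos_of_neg ht hM₂) hr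
    linarith
  rw [hBeq]
  have hB2ne : r ^ 2 * m ^ 2 - t * M₂ * r ≠ 0 := hB2.ne'
  have hB3ne : r * m ^ 2 - M₂ * t ≠ 0 := by
    intro h; apply hB2ne; linear_combination r * h
  have hqne' : 3 * M₀ + r ^ 2 * 5 * M₂ ≠ 0 := by
    rw [show 3 * M₀ + r ^ 2 * 5 * M₂ = 3 * M₀ + 5 * M₂ * r ^ 2 by ring]; exact hqne
  field_simp

/-- LTB instantiation of Proposition 4: for `M₂ < 0` (marginally naked central
singularity), the ratio `𝓔/μ` tends to `−∞` along the apparent horizon as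
`r → 0⁺`; in particular `|𝓔|/μ` tends to `+∞`. -/
theorem ltb_weyl_ratio_diverges (M₀ M₂ : ℝ) (hM₀ : 0 < M₀) (hM₂ : M₂ < 0) :
    Tendsto (fun r : ℝ => ltbE M₀ M₂ r / ltbMu M₀ M₂ r)
      (nhdsWithin 0 (Set.Ioi 0)) atBot ∧
    Tendsto (fun r : ℝ => |ltbE M₀ M₂ r| / ltbMu M₀ M₂ r)
      (nhdsWithin 0 (Set.Ioi 0)) atTop := by
  set L : Filter ℝ := nhdsWithin 0 (Set.Ioi 0) with hL
  -- continuity facts at 0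
  have hMc : Continuous (fun r : ℝ => ltbM M₀ M₂ r) := by
    unfold ltbM; continuity
  have hM0 : ltbM M₀ M₂ 0 = M₀ := by simp [ltbM]
  have hsqc : ContinuousAt (fun r : ℝ => Real.sqrt (ltbM M₀ M₂ r)) 0 :=
    Real.continuous_sqrt.continuousAt.comp hMc.continuousAt
  have hsq0 : Real.sqrt (ltbM M₀ M₂ 0) = Real.sqrt M₀ := by rw [hM0]
  have hsqM₀ : 0 < Real.sqrt M₀ := Real.sqrt_pos.mpr hM₀
  have hthc : ContinuousAt (ltbTh M₀ M₂) 0 := by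
    unfold ltbTh
    apply ContinuousAt.sub
    · apply ContinuousAt.div continuousAt_const (continuousAt_const.mul hsqc)
      simp [hM0, hsqM₀.ne']
    · exact Continuous.continuousAt (by continuity)
  have hth0 : ltbTh M₀ M₂ 0 = 2 / (3 * Real.sqrt M₀) := by
    simp [ltbTh, hM0]
  have hth0pos : 0 < ltbTh M₀ M₂ 0 := by
    rw [hth0]; positivity
  -- eventual facts
  have hev_r : ∀ᶠ r in L, 0 < r := eventually_mem_nhdsWithin
  have hev_m : ∀ᶠ r in L, 0 < ltbM M₀ M₂ r := by
    apply Filter.Eventually.filter_mono nhdsWithin_le_nhds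
    have : Filter.Tendsto (fun r : ℝ => ltbM M₀ M₂ r) (nhds 0) (nhds M₀) := by
      have := hMc.continuousAt (x := 0); rwa [ContinuousAt, hM0] at this
    exact this.eventually (eventually_gt_nhds hM₀)
  have hev_t : ∀ᶠ r in L, 0 < ltbTh M₀ M₂ r := by
    apply Filter.Eventually.filter_mono nhdsWithin_le_nhds
    exact hthc.eventually (p := fun x => 0 < x) ((isOpen_lt continuous_const continuous_id).mem_nhds hth0pos) |>.mono (fun x hx => hx)
  have hev_q : ∀ᶠ r in L, 0 < 3 * M₀ + 5 * M₂ * r ^ 2 := by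
    apply Filter.Eventually.filter_mono nhdsWithin_le_nhds
    have hc : ContinuousAt (fun r : ℝ => 3 * M₀ + 5 * M₂ * r ^ 2) 0 := by fun_prop
    have : Filter.Tendsto (fun r : ℝ => 3 * M₀ + 5 * M₂ * r ^ 2) (nhds 0) (nhds (3 * M₀)) := by
      simpa using hc.tendsto
    exact this.eventually (eventually_gt_nhds (by linarith))
  -- the auxiliary function c
  set c : ℝ → ℝ := fun r =>
    (r * ltbM M₀ M₂ r - ltbTh M₀ M₂ r * M₂ / ltbM M₀ M₂ r) / (3 * M₀ + 5 * M₂ * r ^ 2)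
    with hcdef
  have hc0 : c 0 = (0 - ltbTh M₀ M₂ 0 * M₂ / M₀) / (3 * M₀) := by
    simp [hcdef, hM0]
  have hc0pos : 0 < c 0 := by
    rw [hc0, hth0]
    have h1 : 0 < 2 / (3 * Real.sqrt M₀) := by positivity
    have h2 : 0 < -(2 / (3 * Real.sqrt M₀) * M₂) := by
      rw [neg_pos]; exact mul_neg_of_pos_of_neg h1 hM₂
    rw [zero_sub, ← neg_div]
    positivity
  have hcc : ContinuousAt c 0 := by
    apply ContinuousAt.div
    · apply ContinuousAt.sub
      · exact continuousAt_id.mul hMc.continuousAt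
      · exact (hthc.mul continuousAt_const).div hMc.continuousAt (by rw [hM0]; exact hM₀.ne')
    · fun_prop
    · norm_num; linarith
  have hctend : Tendsto c L (nhds (c 0)) :=
    (hcc.tendsto).mono_left nhdsWithin_le_nhds
  -- the divergent part
  have hinv : Tendsto (fun r : ℝ => r⁻¹) L atTop := tendsto_inv_nhdsGT_zero
  have hX : Tendsto (fun r : ℝ => r⁻¹ * c r) L atTop :=
    hinv.atTop_mul_pos hc0pos hctend
  have hfirst' : Tendsto (fun r : ℝ => 1/3 - r⁻¹ * c r) L atBot := by
    have hneg : Tendsto (fun r : ℝ => -(r⁻¹ * c r)) L atBot :=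
      tendsto_neg_atTop_atBot.comp hX
    have := tendsto_atBot_add_const_left L (1/3 : ℝ) hneg
    simpa [sub_eq_add_neg] using this
  have hev_eq : (fun r : ℝ => ltbE M₀ M₂ r / ltbMu M₀ M₂ r)
      =ᶠ[L] (fun r : ℝ => 1/3 - r⁻¹ * c r) := by
    filter_upwards [hev_r, hev_m, hev_t, hev_q] with r hr hm ht hq
    exact ratio_eq M₀ M₂ r hM₂ hr hm ht hq
  have hfirst : Tendsto (fun r : ℝ => ltbE M₀ M₂ r / ltbMu M₀ M₂ r) L atBot :=
    hfirst'.congr' hev_eq.symm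
  refine ⟨hfirst, ?_⟩
  -- second part
  have hev_mu : ∀ᶠ r in L, 0 < ltbMu M₀ M₂ r := by
    filter_upwards [hev_r, hev_m, hev_t, hev_q] with r hr hm ht hq
    exact mu_pos M₀ M₂ r hM₂ hr hm ht hq
  have hev_neg : ∀ᶠ r in L, ltbE M₀ M₂ r / ltbMu M₀ M₂ r < 0 :=
    hfirst.eventually (eventually_lt_atBot 0)
  have hev_abs : (fun r : ℝ => |ltbE M₀ M₂ r| / ltbMu M₀ M₂ r)
      =ᶠ[L] (fun r : ℝ => -(ltbE M₀ M₂ r / ltbMu M₀ M₂ r)) := by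
    filter_upwards [hev_mu, hev_neg] with r hμ hEμ
    have hE : ltbE M₀ M₂ r < 0 := by
      by_contra h
      push_neg at h
      exact absurd (div_nonneg h hμ.le) (not_le.mpr hEμ)
    rw [abs_of_neg hE, neg_div]
  have : Tendsto (fun r : ℝ => -(ltbE M₀ M₂ r / ltbMu M₀ M₂ r)) L atTop :=
    tendsto_neg_atBot_atTop.comp hfirst
  exact this.congr' hev_abs.symm
end
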